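/- Suppose u is a classical solution on [0,T] × ℝⁿ, periodic in x, of u_t(t,x) = p.v. ∫_{ℝⁿ} (u(t,y) − u(t,x)) u(t,y) |x−y|^{−n−1} dy, and suppose 0 < m₀ ≤ u(0,x) ≤ M₀ for all x. Then m₀ ≤ u(t,x) ≤ M₀ for all t ∈ [0,T] and x ∈ ℝⁿ. -/

import Mathlib

open MeasureTheory Filter

/-- One-sided derivative sign: if `ψ t₀ = 0`, `ψ ≤ 0` on `[0, t₀)`, and `ψ` is
differentiable at `t₀ > 0` with derivative `d`, then `0 ≤ d`. -/
private lemma slope_sign_aux {ψ : ℝ → ℝ} {d t₀ : ℝ} (ht₀ : 0 < t₀)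
    (hd : HasDerivAt ψ d t₀) (h0 : ψ t₀ = 0)
    (hneg : ∀ s ∈ Set.Ico 0 t₀, ψ s ≤ 0) : 0 ≤ d := by
  have h := (hd.hasDerivWithinAt (s := Set.Ico 0 t₀))
  rw [hasDerivWithinAt_iff_tendsto_slope] at h
  have hdiff : Set.Ico (0:ℝ) t₀ \ {t₀} = Set.Ico 0 t₀ := by
    apply Set.diff_singleton_eq_self
    simp [Set.mem_Ico]
  rw [hdiff] at h
  have hne : (nhdsWithin t₀ (Set.Ico 0 t₀)).NeBot := by
    apply mem_closure_iff_nhdsWithin_neBot.mp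
    rw [closure_Ico ht₀.ne]
    exact Set.right_mem_Icc.mpr ht₀.le
  refine ge_of_tendsto h (eventually_nhdsWithin_of_forall ?_)
  intro s hs
  have h1 : ψ s - ψ t₀ ≤ 0 := by rw [h0]; simpa using hneg s hs
  have h2 : s - t₀ ≤ 0 := by
    have := hs.2; linarith
  rw [slope_def_field]
  exact div_nonneg_iff.mpr (Or.inr ⟨h1, h2⟩)

/-- Left-limit comparison: if `f ≤ g` on `[0, t₀)` and both are continuous, then `f t₀ ≤ g t₀`. -/
private lemma left_limit_le {f g : ℝ → ℝ} (hf : Continuous f) (hg : Continuous g) {t₀ : ℝ}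
    (ht₀ : 0 < t₀) (h : ∀ s ∈ Set.Ico 0 t₀, f s ≤ g s) : f t₀ ≤ g t₀ := by
  have hne : (nhdsWithin t₀ (Set.Ico 0 t₀)).NeBot := by
    apply mem_closure_iff_nhdsWithin_neBot.mp
    rw [closure_Ico ht₀.ne]
    exact Set.right_mem_Icc.mpr ht₀.le
  exact le_of_tendsto_of_tendsto (hf.continuousWithinAt) (hg.continuousWithinAt)
    (eventually_nhdsWithin_of_forall h)

/-- Maximum/minimum principle for the nonlocal Burgers equation: if `u` is a continuous,
spatially periodic classical solution on `[0,T] × ℝⁿ` of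
`u_t(t,x) = p.v. ∫ (u(t,y) - u(t,x)) u(t,y) |x - y|^{-n-1} dy`
with `0 < m₀ ≤ u(0,·) ≤ M₀`, then `m₀ ≤ u(t,·) ≤ M₀` for all `t ∈ [0,T]`. -/
theorem nonlocal_burgers_max_principle (n : ℕ) (hn : 1 ≤ n) (T L m₀ M₀ : ℝ)
    (hT : 0 < T) (hL : 0 < L) (hm₀ : 0 < m₀) (hm₀M₀ : m₀ ≤ M₀)
    (u : ℝ → EuclideanSpace ℝ (Fin n) → ℝ)
    (F : ℝ → EuclideanSpace ℝ (Fin n) → ℝ)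
    (hcont : Continuous fun p : ℝ × EuclideanSpace ℝ (Fin n) => u p.1 p.2)
    (hper : ∀ (t : ℝ) (x : EuclideanSpace ℝ (Fin n)) (i : Fin n),
      u t (x + L • EuclideanSpace.single i (1:ℝ)) = u t x)
    (hpv : ∀ t ∈ Set.Icc 0 T, ∀ x : EuclideanSpace ℝ (Fin n),
      Tendsto (fun ε : ℝ =>
          ∫ y in {y : EuclideanSpace ℝ (Fin n) | ε ≤ ‖y - x‖},
            (u t y - u t x) * u t y * ‖x - y‖ ^ (-(n:ℝ) - 1))
        (nhdsWithin 0 (Set.Ioi 0)) (nhds (F t x)))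
    (hderiv : ∀ (x : EuclideanSpace ℝ (Fin n)), ∀ t ∈ Set.Icc 0 T,
      HasDerivAt (fun s => u s x) (F t x) t)
    (hinit : ∀ x, m₀ ≤ u 0 x ∧ u 0 x ≤ M₀) :
    ∀ t ∈ Set.Icc 0 T, ∀ x, m₀ ≤ u t x ∧ u t x ≤ M₀ := by
  -- periodicity for integer multiples
  have per_int : ∀ (t : ℝ) (x : EuclideanSpace ℝ (Fin n)) (i : Fin n) (k : ℤ),
      u t (x + ((k:ℝ) * L) • EuclideanSpace.single i (1:ℝ)) = u t x := by
    intro t x i k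
    induction k using Int.induction_on with
    | zero => simp
    | succ k ih =>
      have harith : x + ((((k:ℤ) + 1 : ℤ) : ℝ) * L) • EuclideanSpace.single i (1:ℝ)
          = (x + (((k:ℤ) : ℝ) * L) • EuclideanSpace.single i (1:ℝ)) + L • EuclideanSpace.single i (1:ℝ) := by
        push_cast
        module
      rw [harith, hper, ih]
    | pred k ih =>
      have harith : (x + (((-(k:ℤ) - 1 : ℤ) : ℝ) * L) • EuclideanSpace.single i (1:ℝ))
            + L • EuclideanSpace.single i (1:ℝ)
          = x + (((-(k:ℤ) : ℤ) : ℝ) * L) • EuclideanSpace.single i (1:ℝ) := by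
        push_cast
        module
      rw [← hper t (x + (((-(k:ℤ) - 1 : ℤ) : ℝ) * L) • EuclideanSpace.single i (1:ℝ)) i,
        harith, ih]
  -- reduction to a compact fundamental region
  set R : ℝ := L * Real.sqrt n with hR
  have reduce : ∀ (t : ℝ) (x : EuclideanSpace ℝ (Fin n)),
      ∃ x', ‖x'‖ ≤ R ∧ u t x' = u t x := by
    intro t x
    refine ⟨x - ∑ i : Fin n, ((⌊x i / L⌋ : ℝ) * L) • EuclideanSpace.single i (1:ℝ), ?_, ?_⟩
    · -- norm bound
      set x' := x - ∑ i : Fin n, ((⌊x i / L⌋ : ℝ) * L) • EuclideanSpace.single i (1:ℝ) with hx'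
      have happ : ∀ i, x' i = x i - (⌊x i / L⌋ : ℝ) * L := by
        intro i
        have : (∑ k : Fin n, ((⌊x k / L⌋ : ℝ) * L) • EuclideanSpace.single k (1:ℝ)) i
            = (⌊x i / L⌋ : ℝ) * L := by
          rw [WithLp.ofLp_sum, Finset.sum_apply]
          simp [EuclideanSpace.single_apply]
        simp only [hx', PiLp.sub_apply, this]
      have hbd : ∀ i, ‖x' i‖ ≤ L := by
        intro i
        rw [happ i, Real.norm_eq_abs]
        have h1 : (⌊x i / L⌋ : ℝ) ≤ x i / L := Int.floor_le _
        have h2 : x i / L < (⌊x i / L⌋ : ℝ) + 1 := Int.lt_floor_add_one _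
        have hxi : x i = (x i / L) * L := (div_mul_cancel₀ _ hL.ne').symm
        rw [abs_le]
        constructor
        · nlinarith [mul_le_mul_of_nonneg_right h1 hL.le, hxi]
        · nlinarith [mul_le_mul_of_nonneg_right h2.le hL.le, hxi]
      rw [EuclideanSpace.norm_eq]
      have hsum : (∑ i, ‖x' i‖ ^ 2) ≤ (n : ℝ) * L ^ 2 := by
        calc (∑ i, ‖x' i‖ ^ 2) ≤ ∑ _i : Fin n, L ^ 2 := by
              apply Finset.sum_le_sum
              intro i _
              have := hbd i
              nlinarith [norm_nonneg (x' i)]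
          _ = (n : ℝ) * L ^ 2 := by simp [mul_comm]
      calc Real.sqrt (∑ i, ‖x' i‖ ^ 2) ≤ Real.sqrt ((n:ℝ) * L ^ 2) := Real.sqrt_le_sqrt hsum
        _ = L * Real.sqrt n := by
            rw [Real.sqrt_mul (Nat.cast_nonneg n), Real.sqrt_sq hL.le, mul_comm]
    · -- value unchanged
      have key : ∀ s : Finset (Fin n),
          u t (x - ∑ i ∈ s, ((⌊x i / L⌋ : ℝ) * L) • EuclideanSpace.single i (1:ℝ)) = u t x := by
        intro s
        induction s using Finset.induction_on with
        | empty => simp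
        | @insert j s' hj ih =>
          rw [Finset.sum_insert hj]
          have harith : x - (((⌊x j / L⌋ : ℝ) * L) • EuclideanSpace.single j (1:ℝ)
                + ∑ i ∈ s', ((⌊x i / L⌋ : ℝ) * L) • EuclideanSpace.single i (1:ℝ))
              = (x - ∑ i ∈ s', ((⌊x i / L⌋ : ℝ) * L) • EuclideanSpace.single i (1:ℝ))
                + (((-⌊x j / L⌋ : ℤ) : ℝ) * L) • EuclideanSpace.single j (1:ℝ) := by
            push_cast
            module
          rw [harith, per_int, ih]
      exact key Finset.univ
  -- the main bootstrap claim with barrier δ(1+t)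
  have key : ∀ δ : ℝ, 0 < δ → δ * (1 + T) < m₀ →
      ∀ t ∈ Set.Icc 0 T, ∀ x, m₀ - δ * (1 + t) ≤ u t x ∧ u t x ≤ M₀ + δ * (1 + t) := by
    intro δ hδ hδm
    by_contra hcon
    push_neg at hcon
    obtain ⟨t₁, ht₁, x₁, hviol₁⟩ := hcon
    set K : Set (EuclideanSpace ℝ (Fin n)) := Metric.closedBall 0 R with hK
    set C : Set (ℝ × EuclideanSpace ℝ (Fin n)) :=
      {p | M₀ + δ * (1 + p.1) ≤ u p.1 p.2 ∨ u p.1 p.2 ≤ m₀ - δ * (1 + p.1)} with hC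
    have hCclosed : IsClosed C := by
      apply IsClosed.union
      · exact isClosed_le (by fun_prop) hcont
      · exact isClosed_le hcont (by fun_prop)
    set B : Set ℝ := Prod.fst '' ((Set.Icc 0 T ×ˢ K) ∩ C) with hB
    have hBcomp : IsCompact B :=
      (((isCompact_Icc).prod (isCompact_closedBall _ _)).inter_right hCclosed).image continuous_fst
    have hBsub : B ⊆ Set.Icc 0 T := by
      rintro t ⟨⟨t', x'⟩, ⟨⟨ht', _⟩, _⟩, rfl⟩
      exact ht'
    have hBne : B.Nonempty := by
      obtain ⟨x₁', hx₁'R, hx₁'u⟩ := reduce t₁ x₁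
      refine ⟨t₁, ⟨(t₁, x₁'), ⟨⟨ht₁, ?_⟩, ?_⟩, rfl⟩⟩
      · simpa [hK, Metric.mem_closedBall, dist_eq_norm] using hx₁'R
      · simp only [hC, Set.mem_setOf_eq, hx₁'u]
        by_cases h : m₀ - δ * (1 + t₁) ≤ u t₁ x₁
        · exact Or.inl (hviol₁ h).le
        · exact Or.inr (not_le.mp h).le
    set t₀ : ℝ := sInf B with ht₀
    have ht₀B : t₀ ∈ B := hBcomp.sInf_mem hBne
    obtain ⟨⟨t₀', x₀⟩, ⟨⟨ht₀Icc', hx₀K⟩, hviol⟩, heqt⟩ := ht₀B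
    simp only at heqt
    subst heqt
    have ht₀Icc : t₀ ∈ Set.Icc 0 T := ht₀Icc'
    -- t₀ > 0
    have ht₀pos : 0 < t₀ := by
      rcases lt_or_eq_of_le ht₀Icc.1 with h | h
      · exact h
      · exfalso
        rw [← h] at hviol
        simp only [hC, Set.mem_setOf_eq] at hviol
        obtain ⟨hi1, hi2⟩ := hinit x₀
        rcases hviol with h' | h' <;> nlinarith
    -- strict bounds before t₀
    have hQ : ∀ s, 0 ≤ s → s < t₀ → ∀ x,
        m₀ - δ * (1 + s) < u s x ∧ u s x < M₀ + δ * (1 + s) := by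
      intro s hs0 hst x
      obtain ⟨x', hx'R, hx'u⟩ := reduce s x
      rw [← hx'u]
      have hsB : s ∉ B := by
        intro hmem
        have : t₀ ≤ s := csInf_le hBcomp.bddBelow hmem
        linarith
      have hsIcc : s ∈ Set.Icc 0 T := ⟨hs0, le_trans hst.le ht₀Icc.2⟩
      by_contra hcon'
      apply hsB
      refine ⟨(s, x'), ⟨⟨hsIcc, ?_⟩, ?_⟩, rfl⟩
      · simpa [hK, Metric.mem_closedBall, dist_eq_norm] using hx'R
      · simp only [hC, Set.mem_setOf_eq]
        rcases not_and_or.mp hcon' with h | h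
        · exact Or.inr (le_of_not_gt h)
        · exact Or.inl (le_of_not_gt h)
    -- nonstrict bounds at t₀, for all x
    have hcx : ∀ x : EuclideanSpace ℝ (Fin n), Continuous fun s => u s x := by
      intro x
      exact hcont.comp (continuous_id.prodMk continuous_const)
    have hbound : ∀ x, m₀ - δ * (1 + t₀) ≤ u t₀ x ∧ u t₀ x ≤ M₀ + δ * (1 + t₀) := by
      intro x
      constructor
      · have := left_limit_le (f := fun s => m₀ - δ * (1 + s)) (g := fun s => u s x)
          (by fun_prop) (hcx x) ht₀pos (fun s hs => (hQ s hs.1 hs.2 x).1.le)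
        exact this
      · exact left_limit_le (hcx x) (by fun_prop) ht₀pos
          (fun s hs => (hQ s hs.1 hs.2 x).2.le)
    have hδt₀ : δ * (1 + t₀) < m₀ := by
      have := ht₀Icc.2
      nlinarith
    simp only [hC, Set.mem_setOf_eq] at hviol
    rcases hviol with hmaxcase | hmincase
    · -- maximum case
      have heq : u t₀ x₀ = M₀ + δ * (1 + t₀) := le_antisymm (hbound x₀).2 hmaxcase
      have hmax : ∀ y, u t₀ y ≤ u t₀ x₀ := fun y => heq ▸ (hbound y).2
      have hpos : ∀ y, 0 < u t₀ y := fun y => lt_of_lt_of_le (by linarith) (hbound y).1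
      have hFle : F t₀ x₀ ≤ 0 := by
        refine le_of_tendsto (hpv t₀ ht₀Icc x₀) (Eventually.of_forall ?_)
        intro ε
        apply MeasureTheory.setIntegral_nonpos
        · exact (isClosed_le continuous_const
            ((continuous_id.sub continuous_const).norm)).measurableSet
        · intro y _
          have h1 : u t₀ y - u t₀ x₀ ≤ 0 := sub_nonpos.mpr (hmax y)
          have h2 : (0:ℝ) < u t₀ y := hpos y
          have h3 : (0:ℝ) ≤ ‖x₀ - y‖ ^ (-(n:ℝ) - 1) := Real.rpow_nonneg (norm_nonneg _) _
          have := mul_nonpos_of_nonpos_of_nonneg h1 h2.le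
          exact mul_nonpos_of_nonpos_of_nonneg this h3
      have hψ : HasDerivAt (fun s => u s x₀ - (M₀ + δ * (1 + s))) (F t₀ x₀ - δ) t₀ := by
        have h1 := hderiv x₀ t₀ ht₀Icc
        have h2 : HasDerivAt (fun s : ℝ => M₀ + δ * (1 + s)) δ t₀ := by
          simpa using (((hasDerivAt_id t₀).const_add (1:ℝ)).const_mul δ).const_add M₀
        exact h1.sub h2
      have hsign := slope_sign_aux ht₀pos hψ (by simp [heq]) ?_
      · linarith
      · intro s hs
        have := (hQ s hs.1 hs.2 x₀).2
        show u s x₀ - (M₀ + δ * (1 + s)) ≤ 0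
        linarith
    · -- minimum case
      have heq : u t₀ x₀ = m₀ - δ * (1 + t₀) := le_antisymm hmincase (hbound x₀).1
      have hmin : ∀ y, u t₀ x₀ ≤ u t₀ y := fun y => heq ▸ (hbound y).1
      have hpos : ∀ y, 0 < u t₀ y := fun y =>
        lt_of_lt_of_le (by rw [heq] at *; linarith [heq]) (hbound y).1
      have hFge : 0 ≤ F t₀ x₀ := by
        refine ge_of_tendsto (hpv t₀ ht₀Icc x₀) (Eventually.of_forall ?_)
        intro ε
        apply MeasureTheory.setIntegral_nonneg
        · exact (isClosed_le continuous_const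
            ((continuous_id.sub continuous_const).norm)).measurableSet
        · intro y _
          have h1 : 0 ≤ u t₀ y - u t₀ x₀ := sub_nonneg.mpr (hmin y)
          have h2 : (0:ℝ) < u t₀ y := hpos y
          have h3 : (0:ℝ) ≤ ‖x₀ - y‖ ^ (-(n:ℝ) - 1) := Real.rpow_nonneg (norm_nonneg _) _
          exact mul_nonneg (mul_nonneg h1 h2.le) h3
      have hψ : HasDerivAt (fun s => (m₀ - δ * (1 + s)) - u s x₀) (-δ - F t₀ x₀) t₀ := by
        have h1 := hderiv x₀ t₀ ht₀Icc
        have h2 : HasDerivAt (fun s : ℝ => m₀ - δ * (1 + s)) (-δ) t₀ := by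
          have := (((hasDerivAt_id t₀).const_add (1:ℝ)).const_mul δ).const_sub m₀
          simpa using this
        exact h2.sub h1
      have hsign := slope_sign_aux ht₀pos hψ (by simp [heq]) ?_
      · linarith
      · intro s hs
        have := (hQ s hs.1 hs.2 x₀).1
        show (m₀ - δ * (1 + s)) - u s x₀ ≤ 0
        linarith
  -- conclude by letting δ → 0
  intro t ht x
  have h1T : (0:ℝ) < 1 + T := by linarith
  have h2T : (0:ℝ) < 2 * (1 + T) := by positivity
  constructor
  · by_contra hcon
    push_neg at hcon
    set δ := min ((m₀ - u t x) / (2 * (1 + T))) (m₀ / (2 * (1 + T))) with hδdef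
    have hδpos : 0 < δ := lt_min (div_pos (by linarith) h2T) (div_pos hm₀ h2T)
    have hδ1 : δ ≤ (m₀ - u t x) / (2 * (1 + T)) := min_le_left _ _
    have hδ2 : δ ≤ m₀ / (2 * (1 + T)) := min_le_right _ _
    rw [le_div_iff₀ h2T] at hδ1 hδ2
    have hδm : δ * (1 + T) < m₀ := by nlinarith
    have hbd := (key δ hδpos hδm t ht x).1
    nlinarith [mul_nonneg hδpos.le (sub_nonneg.mpr ht.2)]
  · by_contra hcon
    push_neg at hcon
    set δ := min ((u t x - M₀) / (2 * (1 + T))) (m₀ / (2 * (1 + T))) with hδdef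
    have hδpos : 0 < δ := lt_min (div_pos (by linarith) h2T) (div_pos hm₀ h2T)
    have hδ1 : δ ≤ (u t x - M₀) / (2 * (1 + T)) := min_le_left _ _
    have hδ2 : δ ≤ m₀ / (2 * (1 + T)) := min_le_right _ _
    rw [le_div_iff₀ h2T] at hδ1 hδ2
    have hδm : δ * (1 + T) < m₀ := by nlinarith
    have hbd := (key δ hδpos hδm t ht x).2
    nlinarith [mul_nonneg hδpos.le (sub_nonneg.mpr ht.2)]
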